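/- Let X be a compact Hausdorff space, N = {1,…,n}, G = N × X × N the groupoid of the trivial equivalence relation on N fibered over X, c : G → ℝ a continuous 1-cocycle, and β ∈ ℝ. Given a finite measure μ₁ on X, define measures μ_k on X_k = {k} × X by dμ_k(x) = e^{−β c(k,x,1)} dμ₁(x), set μ = ∑_{k=1}^n μ_k, and ν = μ / μ(G⁽⁰⁾). Then ν is a quasi-invariant probability measure on G⁽⁰⁾ = N × X with Radon–Nikodym derivative e^{−βc}; that is, ∫ ∑_{(i,x,j)∈G^{(h,x)}} f(i,x,j) dν(h,x) = ∫ ∑_{(i,x,j)∈G_{(h,x)}} f(i,x,j) e^{−β c(i,x,j)} dν(h,x) for all f ∈ C(G). -/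

import Mathlib

open Filter Topology MeasureTheory

/-- Let `X` be compact Hausdorff, `N = Fin n`, `G = N × X × N` the groupoid of the trivial
equivalence on `N` fibred over `X`, `c : G → ℝ` a continuous 1-cocycle and `β ∈ ℝ`.  Given a
nonzero finite measure `μ₁` on `X`, define `μ_k` on `X_k = {k} × X` by
`dμ_k x = exp (-β c (k,x,0)) dμ₁ x`, `μ = ∑_k μ_k` and `ν = μ / μ(G⁽⁰⁾)`.  Then `ν` is a
quasi-invariant probability measure on `G⁽⁰⁾ = N × X` with Radon–Nikodym derivative
`e^{-βc}`:  `∫ ∑_{γ ∈ G^u} f γ dν u = ∫ ∑_{γ ∈ G_u} f γ · e^{-β c γ} dν u` for `f ∈ C(G)`. -/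
theorem stmt_15 {X : Type*} [TopologicalSpace X] [CompactSpace X] [T2Space X]
    [MeasurableSpace X] [BorelSpace X] {n : ℕ} [NeZero n]
    (c : Fin n × X × Fin n → ℝ) (hc : Continuous c)
    (hcocycle : ∀ (h m k : Fin n) (x : X), c (h, x, m) + c (m, x, k) = c (h, x, k))
    (β : ℝ)
    (μ₁ : Measure X) [IsFiniteMeasure μ₁] (hμ₁ : μ₁ ≠ 0) :
    ∀ μk : Fin n → Measure X,
      (μk = fun k => μ₁.withDensity fun x => ENNReal.ofReal (Real.exp (-β * c (k, x, 0)))) →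
    ∀ μ : Measure (Fin n × X),
      (μ = Measure.sum fun k => (μk k).map fun x => (k, x)) →
    ∀ ν : Measure (Fin n × X), (ν = (μ Set.univ)⁻¹ • μ) →
    IsProbabilityMeasure ν ∧
    ∀ f : Fin n × X × Fin n → ℂ, Continuous f →
      ∫ u, (∑ j : Fin n, f (u.1, u.2, j)) ∂ν
        = ∫ u, (∑ i : Fin n, f (i, u.2, u.1) * (Real.exp (-β * c (i, u.2, u.1)) : ℝ)) ∂ν := by
  intro μk hμk μ hμ ν hν
  have hXne : Nonempty X := by
    by_contra h
    rw [not_nonempty_iff] at h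
    exact hμ₁ (Measure.eq_zero_of_isEmpty μ₁)
  -- the density functions
  set d : Fin n → X → ℝ := fun k x => Real.exp (-β * c (k, x, 0)) with hd
  have hdc : ∀ k, Continuous (d k) := by
    intro k
    exact Real.continuous_exp.comp <| (continuous_const.mul
      (hc.comp (continuous_const.prodMk (continuous_id.prodMk continuous_const))))
  have hdpos : ∀ k x, 0 < d k x := fun k x => Real.exp_pos _
  -- global bounds on the density over the compact space
  have hgc : Continuous (fun p : Fin n × X => d p.1 p.2) :=
    Real.continuous_exp.comp <| continuous_const.mul
      (hc.comp (continuous_fst.prodMk (continuous_snd.prodMk continuous_const)))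
  obtain ⟨pM, -, hM'⟩ := isCompact_univ.exists_isMaxOn Set.univ_nonempty hgc.continuousOn
  obtain ⟨pm, -, hm'⟩ := isCompact_univ.exists_isMinOn Set.univ_nonempty hgc.continuousOn
  have hM : ∀ p : Fin n × X, d p.1 p.2 ≤ d pM.1 pM.2 := fun p => hM' (Set.mem_univ p)
  have hm : ∀ p : Fin n × X, d pm.1 pm.2 ≤ d p.1 p.2 := fun p => hm' (Set.mem_univ p)
  -- each μk has total mass computed as a lintegral
  have hμk_univ : ∀ k, μk k Set.univ = ∫⁻ x, ENNReal.ofReal (d k x) ∂μ₁ := by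
    intro k
    rw [hμk]
    simp [withDensity_apply _ MeasurableSet.univ, hd, neg_mul]
  have hμ_univ : μ Set.univ = ∑ k : Fin n, μk k Set.univ := by
    rw [hμ, Measure.sum_apply _ MeasurableSet.univ, tsum_fintype]
    congr 1; ext k
    rw [Measure.map_apply measurable_prodMk_left MeasurableSet.univ]
    simp
  have hlb : ∀ k, ENNReal.ofReal (d pm.1 pm.2) * μ₁ Set.univ ≤ μk k Set.univ := by
    intro k
    rw [hμk_univ k]
    calc ENNReal.ofReal (d pm.1 pm.2) * μ₁ Set.univ
        = ∫⁻ _, ENNReal.ofReal (d pm.1 pm.2) ∂μ₁ := by rw [lintegral_const]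
      _ ≤ _ := lintegral_mono fun x => ENNReal.ofReal_le_ofReal (hm (k, x))
  have hub : ∀ k, μk k Set.univ ≤ ENNReal.ofReal (d pM.1 pM.2) * μ₁ Set.univ := by
    intro k
    rw [hμk_univ k]
    calc ∫⁻ x, ENNReal.ofReal (d k x) ∂μ₁
        ≤ ∫⁻ _, ENNReal.ofReal (d pM.1 pM.2) ∂μ₁ :=
          lintegral_mono fun x => ENNReal.ofReal_le_ofReal (hM (k, x))
      _ = _ := lintegral_const _
  have hμ_ne_top : μ Set.univ ≠ ⊤ := by
    rw [hμ_univ]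
    refine (ne_of_lt (lt_of_le_of_lt (Finset.sum_le_sum fun k _ => hub k) ?_))
    simp only [Finset.sum_const, nsmul_eq_mul]
    exact lt_top_iff_ne_top.mpr (ENNReal.mul_ne_top (ENNReal.natCast_ne_top _)
      (ENNReal.mul_ne_top ENNReal.ofReal_ne_top (measure_ne_top μ₁ _)))
  have hμ_ne_zero : μ Set.univ ≠ 0 := by
    rw [hμ_univ]
    intro h0
    have h1 : μk ⟨0, Nat.pos_of_ne_zero (NeZero.ne n)⟩ Set.univ = 0 := by
      have := Finset.sum_eq_zero_iff_of_nonneg (fun k _ => zero_le) |>.mp h0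
      exact this _ (Finset.mem_univ _)
    have h2 := hlb ⟨0, Nat.pos_of_ne_zero (NeZero.ne n)⟩
    rw [h1, le_zero_iff, mul_eq_zero] at h2
    rcases h2 with h2 | h2
    · exact absurd h2 (by simp [ENNReal.ofReal_eq_zero, not_le, hdpos])
    · exact hμ₁ (Measure.measure_univ_eq_zero.mp h2)
  haveI hμfin : IsFiniteMeasure μ := ⟨hμ_ne_top.lt_top⟩
  -- the key computation: integrals against μ reduce to integrals against μ₁
  have key : ∀ g : Fin n × X → ℂ, Continuous g →
      ∫ u, g u ∂μ = ∑ k : Fin n, ∫ x, (d k x : ℂ) * g (k, x) ∂μ₁ := by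
    intro g hg
    have hint : Integrable g μ :=
      hg.integrable_of_hasCompactSupport (HasCompactSupport.of_compactSpace g)
    rw [hμ] at hint ⊢
    rw [integral_sum_measure hint, tsum_fintype]
    refine Finset.sum_congr rfl fun k _ => ?_
    rw [integral_map measurable_prodMk_left.aemeasurable hg.aestronglyMeasurable, hμk]
    have hmeas : Measurable fun x => (d k x).toNNReal := (hdc k).measurable.real_toNNReal
    calc ∫ x, g (k, x) ∂(μ₁.withDensity fun x => ENNReal.ofReal (Real.exp (-β * c (k, x, 0))))
        = ∫ x, (d k x).toNNReal • g (k, x) ∂μ₁ :=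
          integral_withDensity_eq_integral_smul hmeas _
      _ = ∫ x, (d k x : ℂ) * g (k, x) ∂μ₁ := by
          refine integral_congr_ae (ae_of_all _ fun x => ?_)
          simp only [NNReal.smul_def, Real.coe_toNNReal _ (hdpos k x).le, Complex.real_smul]
  constructor
  · refine ⟨?_⟩
    rw [hν, Measure.smul_apply, smul_eq_mul, ENNReal.inv_mul_cancel hμ_ne_zero hμ_ne_top]
  intro f hf
  have hg₁ : Continuous fun u : Fin n × X => ∑ j : Fin n, f (u.1, u.2, j) := by
    refine continuous_finset_sum _ fun j _ => ?_
    exact hf.comp (continuous_fst.prodMk (continuous_snd.prodMk continuous_const))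
  have hg₂ : Continuous fun u : Fin n × X =>
      ∑ i : Fin n, f (i, u.2, u.1) * ((Real.exp (-β * c (i, u.2, u.1)) : ℝ) : ℂ) := by
    refine continuous_finset_sum _ fun i _ => ?_
    have hmap : Continuous fun u : Fin n × X => ((i, u.2, u.1) : Fin n × X × Fin n) :=
      continuous_const.prodMk (continuous_snd.prodMk continuous_fst)
    exact (hf.comp hmap).mul (Complex.continuous_ofReal.comp
      (Real.continuous_exp.comp (continuous_const.mul (hc.comp hmap))))
  have ptwise : ∀ x : X, (∑ k : Fin n, (d k x : ℂ) * ∑ j : Fin n, f (k, x, j))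
      = ∑ h : Fin n, (d h x : ℂ) *
          ∑ i : Fin n, f (i, x, h) * ((Real.exp (-β * c (i, x, h)) : ℝ) : ℂ) := by
    intro x
    simp only [Finset.mul_sum]
    rw [Finset.sum_comm]
    refine Finset.sum_congr rfl fun j _ => Finset.sum_congr rfl fun k _ => ?_
    have hcc : c (k, x, j) + c (j, x, 0) = c (k, x, 0) := hcocycle k j 0 x
    show (Real.exp (-β * c (k, x, 0)) : ℂ) * f (k, x, j)
        = (Real.exp (-β * c (j, x, 0)) : ℂ) * (f (k, x, j) * (Real.exp (-β * c (k, x, j)) : ℂ))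
    rw [show (-β * c (k, x, 0)) = (-β * c (k, x, j)) + (-β * c (j, x, 0)) by
          rw [← hcc]; ring, Real.exp_add]
    push_cast
    ring
  rw [hν]
  simp only [integral_smul_measure]
  congr 1
  have int1 : ∀ k ∈ (Finset.univ : Finset (Fin n)),
      Integrable (fun x => (d k x : ℂ) * ∑ j : Fin n, f (k, x, j)) μ₁ := fun k _ => by
    refine Continuous.integrable_of_hasCompactSupport ?_ (HasCompactSupport.of_compactSpace _)
    exact (Complex.continuous_ofReal.comp (hdc k)).mul
      (hg₁.comp (Continuous.prodMk continuous_const continuous_id))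
  have int2 : ∀ k ∈ (Finset.univ : Finset (Fin n)),
      Integrable (fun x => (d k x : ℂ) *
        ∑ i : Fin n, f (i, x, k) * ((Real.exp (-β * c (i, x, k)) : ℝ) : ℂ)) μ₁ := fun k _ => by
    refine Continuous.integrable_of_hasCompactSupport ?_ (HasCompactSupport.of_compactSpace _)
    exact (Complex.continuous_ofReal.comp (hdc k)).mul
      (hg₂.comp (Continuous.prodMk continuous_const continuous_id))
  calc ∫ u : Fin n × X, (∑ j : Fin n, f (u.1, u.2, j)) ∂μ
      = ∑ k : Fin n, ∫ x, (d k x : ℂ) * ∑ j : Fin n, f (k, x, j) ∂μ₁ := key _ hg₁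
    _ = ∫ x, ∑ k : Fin n, (d k x : ℂ) * ∑ j : Fin n, f (k, x, j) ∂μ₁ :=
        (integral_finset_sum _ int1).symm
    _ = ∫ x, ∑ h : Fin n, (d h x : ℂ) *
          ∑ i : Fin n, f (i, x, h) * ((Real.exp (-β * c (i, x, h)) : ℝ) : ℂ) ∂μ₁ :=
        integral_congr_ae (ae_of_all _ fun x => ptwise x)
    _ = ∑ h : Fin n, ∫ x, (d h x : ℂ) *
          ∑ i : Fin n, f (i, x, h) * ((Real.exp (-β * c (i, x, h)) : ℝ) : ℂ) ∂μ₁ :=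
        integral_finset_sum _ int2
    _ = ∫ u : Fin n × X,
          (∑ i : Fin n, f (i, u.2, u.1) * ((Real.exp (-β * c (i, u.2, u.1)) : ℝ) : ℂ)) ∂μ :=
        (key _ hg₂).symm
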